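/- Assume every level set of f is Λ-null (so f̂^<(x) = f̂^≤(x) =: f̂(x) for all x) and f̂(x) < ∞ for all x ∈ X. Fix m ∈ X and set p = P(S_f^<(m)). Then for every q ∈ [0,p]: P({x ∈ X | f̂(x) + (p − q)/u ≤ f̂(m)}) ≥ q, and the expected decrease satisfies ∫ max{0, f̂(m) − f̂(x)} dP(x) ≥ p²/(2u). -/

import Mathlib

open MeasureTheory Set
open scoped ENNReal


lemma levelset_bound {X : Type*} [MeasurableSpace X] (Λ : Measure X)
    (f : X → ℝ) (hf : Measurable f)
    (hlevel : ∀ y : ℝ, Λ {x | f x = y} = 0)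
    (m : X) (hfinm : Λ {x' | f x' < f m} ≠ ⊤)
    (a : ℝ≥0∞) :
    Λ {x | f x < f m ∧ a ≤ Λ {x' | f x' < f x}} ≤ Λ {x' | f x' < f m} - a := by
  set g : ℝ → ℝ≥0∞ := fun y => Λ {x' | f x' < y} with hg
  have hmono : Monotone g := fun y z hyz => measure_mono (fun x hx => lt_of_lt_of_le hx hyz)
  set T : Set ℝ := {y | y < f m ∧ a ≤ g y} with hT
  by_cases hTne : T.Nonempty
  · by_cases hbdd : BddBelow T
    · set y₀ := sInf T with hy₀
      obtain ⟨y₁, hy₁⟩ := hTne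
      have hy₀le : y₀ ≤ y₁ := csInf_le hbdd hy₁
      have hy₀lt : y₀ < f m := lt_of_le_of_lt hy₀le hy₁.1
      have key : a ≤ g y₀ := by
        set b : ℕ → ℝ := fun n => y₀ + (f m - y₀) / (n + 2) with hb
        have hbpos : ∀ n : ℕ, 0 < (f m - y₀) / ((n : ℝ) + 2) := by
          intro n
          apply div_pos (by linarith) (by positivity)
        have hblt : ∀ n : ℕ, b n < f m := by
          intro n
          have h2 : (f m - y₀) / ((n : ℝ) + 2) < f m - y₀ := by
            apply div_lt_self (by linarith) (by push_cast; linarith [Nat.cast_nonneg (α := ℝ) n])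
          simp only [hb]; linarith
        have hInter : (⋂ n, {x | f x < b n}) = {x | f x ≤ y₀} := by
          ext x
          simp only [mem_iInter, mem_setOf_eq]
          constructor
          · intro h
            by_contra hc
            push_neg at hc
            obtain ⟨n, hn⟩ := exists_nat_gt ((f m - y₀) / (f x - y₀))
            have hn2 : (f m - y₀) / ((n : ℝ) + 2) < f x - y₀ := by
              rw [div_lt_iff₀ (by positivity)]
              have : (f m - y₀) / (f x - y₀) < (n : ℝ) + 2 := by linarith
              calc f m - y₀ = (f m - y₀) / (f x - y₀) * (f x - y₀) :=
                    (div_mul_cancel₀ _ (sub_pos.2 hc).ne').symm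
                _ < ((n : ℝ) + 2) * (f x - y₀) := by
                    apply mul_lt_mul_of_pos_right this (by linarith)
                _ = (f x - y₀) * ((n : ℝ) + 2) := by ring
            have := h n
            simp only [hb] at this
            linarith
          · intro h n
            have := hbpos n
            simp only [hb]; linarith
        have hdir : Directed (· ⊇ ·) fun n : ℕ => {x | f x < b n} := by
          have hanti : Antitone fun n : ℕ => {x | f x < b n} := by
            intro i j hij x hx
            have : b j ≤ b i := by
              simp only [hb]
              have : (f m - y₀) / ((j : ℝ) + 2) ≤ (f m - y₀) / ((i : ℝ) + 2) := by
                apply div_le_div_of_nonneg_left (by linarith) (by positivity) (by push_cast; exact_mod_cast by exact_mod_cast add_le_add_left (Nat.cast_le.2 hij) 2)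
              linarith
            exact lt_of_lt_of_le hx this
          exact hanti.directed_ge
        have hcont := Directed.measure_iInter (μ := Λ)
          (fun n => (hf measurableSet_Iio).nullMeasurableSet) hdir
          ⟨0, by
            apply ne_top_of_le_ne_top hfinm
            exact measure_mono fun x hx => lt_of_lt_of_le hx (hblt 0).le⟩
        have hle : Λ {x | f x ≤ y₀} ≤ g y₀ := by
          have : {x | f x ≤ y₀} ⊆ {x | f x < y₀} ∪ {x | f x = y₀} := by
            intro x hx; rcases lt_or_eq_of_le (show f x ≤ y₀ from hx) with h | h
            · exact Or.inl h
            · exact Or.inr h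
          calc Λ {x | f x ≤ y₀} ≤ Λ ({x | f x < y₀} ∪ {x | f x = y₀}) := measure_mono this
            _ ≤ Λ {x | f x < y₀} + Λ {x | f x = y₀} := measure_union_le _ _
            _ = g y₀ := by rw [hlevel, add_zero]
        have hainf : a ≤ ⨅ n, Λ {x | f x < b n} := by
          apply le_iInf
          intro n
          obtain ⟨y, hyT, hylt⟩ := (csInf_lt_iff hbdd ⟨y₁, hy₁⟩).1
            (show sInf T < b n by simp only [hb]; linarith [hbpos n])
          exact hyT.2.trans (measure_mono fun x hx => lt_of_lt_of_le hx hylt.le)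
        calc a ≤ ⨅ n, Λ {x | f x < b n} := hainf
          _ = Λ (⋂ n, {x | f x < b n}) := hcont.symm
          _ = Λ {x | f x ≤ y₀} := by rw [hInter]
          _ ≤ g y₀ := hle
      calc Λ {x | f x < f m ∧ a ≤ g (f x)}
          ≤ Λ ({x | f x < f m} \ {x | f x < y₀}) := by
            apply measure_mono
            intro x hx
            refine ⟨hx.1, fun hc => ?_⟩
            exact absurd (csInf_le hbdd (show f x ∈ T from ⟨hx.1, hx.2⟩)) (not_le.2 hc)
        _ = Λ {x | f x < f m} - Λ {x | f x < y₀} := by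
            apply measure_diff (fun x hx => lt_of_lt_of_le hx hy₀lt.le)
              (hf measurableSet_Iio).nullMeasurableSet
            exact ne_top_of_le_ne_top hfinm
              (measure_mono fun x hx => lt_trans hx hy₀lt)
        _ ≤ Λ {x' | f x' < f m} - a := tsub_le_tsub_left key _
    · have ha : a = 0 := by
        have h1 : a ≤ ⨅ n : ℕ, Λ {x | f x < f m - ((n : ℝ) + 1)} := by
          apply le_iInf
          intro n
          obtain ⟨y, hyT, hylt⟩ := not_bddBelow_iff.1 hbdd (f m - ((n : ℝ) + 1))
          exact hyT.2.trans (measure_mono fun x hx => lt_trans hx hylt)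
        have h2 : (⋂ n : ℕ, {x | f x < f m - ((n : ℝ) + 1)}) = ∅ := by
          ext x
          simp only [mem_iInter, mem_setOf_eq, mem_empty_iff_false, iff_false, not_forall, not_lt]
          obtain ⟨n, hn⟩ := exists_nat_gt (f m - f x)
          exact ⟨n, by linarith⟩
        have hdir : Directed (· ⊇ ·) fun n : ℕ => {x | f x < f m - ((n : ℝ) + 1)} := by
          have hanti : Antitone fun n : ℕ => {x | f x < f m - ((n : ℝ) + 1)} := by
            intro i j hij x hx
            have h1 : (i : ℝ) ≤ (j : ℝ) := Nat.cast_le.2 hij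
            have h2 : f x < f m - ((j : ℝ) + 1) := hx
            show f x < f m - ((i : ℝ) + 1)
            linarith
          exact hanti.directed_ge
        have hcont := Directed.measure_iInter (μ := Λ)
          (fun n => (hf measurableSet_Iio).nullMeasurableSet) hdir
          ⟨0, ne_top_of_le_ne_top hfinm (measure_mono fun x (hx : f x < f m - ((0:ℕ) + 1 : ℝ)) =>
            lt_trans hx (by norm_num))⟩
        have hcont' : Λ (⋂ n : ℕ, {x | f x < f m - ((n : ℝ) + 1)})
            = ⨅ n : ℕ, Λ {x | f x < f m - ((n : ℝ) + 1)} := hcont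
        rw [h2, measure_empty] at hcont'
        have hcont := hcont'
        exact le_antisymm (h1.trans_eq hcont.symm) (zero_le)
      rw [ha, tsub_zero]
      exact measure_mono fun x hx => hx.1
  · have hempty : {x | f x < f m ∧ a ≤ g (f x)} = ∅ := by
      ext x
      simp only [mem_setOf_eq, mem_empty_iff_false, iff_false, not_and]
      intro h1 h2
      exact hTne ⟨f x, h1, h2⟩
    rw [hempty, measure_empty]
    exact zero_le

lemma key_bound {X : Type*} [MeasurableSpace X] (Λ P : Measure X)
    (f : X → ℝ) (hf : Measurable f)
    (hlevel : ∀ y : ℝ, Λ {x | f x = y} = 0)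
    (u : ℝ) (hPu : ∀ A : Set X, MeasurableSet A → P A ≤ ENNReal.ofReal u * Λ A)
    (m : X) (hfinm : Λ {x' | f x' < f m} ≠ ⊤) (c : ℝ≥0∞) :
    P {x | f x < f m} - ENNReal.ofReal u * c
      ≤ P {x | Λ {x' | f x' < f x} + c < Λ {x' | f x' < f m}} := by
  set g : ℝ → ℝ≥0∞ := fun y => Λ {x' | f x' < y} with hg
  have hmono : Monotone g := fun y z hyz => measure_mono (fun x hx => lt_of_lt_of_le hx hyz)
  set gm : ℝ≥0∞ := Λ {x' | f x' < f m} with hgm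
  set A : Set X := {x | g (f x) + c < gm} with hA
  have hAmeas : MeasurableSet A := by
    have : A = f ⁻¹' {y | g y + c < gm} := rfl
    rw [this]
    apply hf
    apply Set.OrdConnected.measurableSet
    apply IsLowerSet.ordConnected
    intro y z hzy hy
    exact lt_of_le_of_lt (add_le_add_left (hmono hzy) c) hy
  have hSmeas : MeasurableSet {x | f x < f m} := hf measurableSet_Iio
  rw [tsub_le_iff_right]
  have hdiff : Λ ({x | f x < f m} \ A) ≤ c := by
    have hsub : {x | f x < f m} \ A ⊆ {x | f x < f m ∧ gm - c ≤ g (f x)} := by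
      intro x hx
      refine ⟨hx.1, tsub_le_iff_right.mpr (not_lt.1 hx.2)⟩
    calc Λ ({x | f x < f m} \ A) ≤ Λ {x | f x < f m ∧ gm - c ≤ g (f x)} := measure_mono hsub
      _ ≤ gm - (gm - c) := levelset_bound Λ f hf hlevel m hfinm (gm - c)
      _ ≤ c := tsub_le_iff_right.mpr le_add_tsub
  calc P {x | f x < f m} = P ({x | f x < f m} ∩ A) + P ({x | f x < f m} \ A) :=
        (measure_inter_add_diff _ hAmeas).symm
    _ ≤ P A + ENNReal.ofReal u * c := by
        apply add_le_add (measure_mono inter_subset_right)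
        exact (hPu _ (hSmeas.diff hAmeas)).trans (mul_le_mul_right hdiff _)

/-- Plateau-free decrease guarantee. If all level sets of `f` are
`Λ`-null (so `f̂^< = f̂^≤ =: f̂`) and `f̂` is everywhere finite, then for a sample
`x ∼ P` (with density bounded by `u` w.r.t. `Λ`) and `p = P(S_f^<(m))`:
for every `q ∈ [0, p]` the `q`-quantile of the `f̂`-decrease is at least `(p − q)/u`,
and the expected decrease satisfies `∫ max{0, f̂(m) − f̂(x)} dP(x) ≥ p²/(2u)`. -/
theorem plateau_free_decrease
    {X : Type*} [MeasurableSpace X] (Λ : Measure X) [SigmaFinite Λ]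
    (P : Measure X) [IsProbabilityMeasure P]
    (f : X → ℝ) (hf : Measurable f)
    (hlevel : ∀ y : ℝ, Λ {x | f x = y} = 0)
    (hfin : ∀ x : X, Λ {x' | f x' ≤ f x} < ⊤)
    (u : ℝ) (hu : 0 < u)
    (hPu : ∀ A : Set X, MeasurableSet A → P A ≤ ENNReal.ofReal u * Λ A)
    (m : X) :
    (∀ q ∈ Icc (0 : ℝ) (P {x | f x < f m}).toReal,
      ENNReal.ofReal q ≤
        P {x | Λ {x' | f x' < f x}
            + ENNReal.ofReal (((P {x | f x < f m}).toReal - q) / u)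
            ≤ Λ {x' | f x' < f m}}) ∧
    (P {x | f x < f m}).toReal ^ 2 / (2 * u) ≤
      ∫ x, max 0 ((Λ {x' | f x' < f m}).toReal - (Λ {x' | f x' < f x}).toReal) ∂P := by
  have hfinm : Λ {x' | f x' < f m} ≠ ⊤ := by
    apply ne_top_of_le_ne_top (hfin m).ne
    exact measure_mono fun x (hx : f x < f m) => le_of_lt hx
  set p : ℝ := (P {x | f x < f m}).toReal with hp
  have hPSofReal : ENNReal.ofReal p = P {x | f x < f m} :=
    ENNReal.ofReal_toReal (measure_ne_top P _)
  constructor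
  · intro q hq
    obtain ⟨hq0, hqp⟩ := hq
    set c := ENNReal.ofReal ((p - q) / u) with hc
    have huc : ENNReal.ofReal u * c = ENNReal.ofReal (p - q) := by
      rw [hc, ← ENNReal.ofReal_mul hu.le]
      congr 1
      field_simp
    have h1 := key_bound Λ P f hf hlevel u hPu m hfinm c
    have h2 : ENNReal.ofReal q ≤ P {x | f x < f m} - ENNReal.ofReal u * c := by
      rw [huc, ← hPSofReal, ← ENNReal.ofReal_sub p (sub_nonneg.2 hqp)]
      exact ENNReal.ofReal_le_ofReal (by linarith)
    refine h2.trans (h1.trans (measure_mono fun x hx => ?_))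
    simp only [mem_setOf_eq] at hx ⊢
    exact hx.le
  · set gm : ℝ≥0∞ := Λ {x' | f x' < f m} with hgm
    set D : X → ℝ := fun x => max 0 (gm.toReal - (Λ {x' | f x' < f x}).toReal) with hD
    have hDnn : ∀ x, 0 ≤ D x := fun x => le_max_left _ _
    have hgmeas : Measurable (fun y : ℝ => Λ {x' | f x' < y}) := by
      apply Monotone.measurable
      exact fun y z hyz => measure_mono (fun x hx => lt_of_lt_of_le hx hyz)
    have hDmeas : Measurable D := by
      apply measurable_const.max
      exact measurable_const.sub (ENNReal.measurable_toReal.comp (hgmeas.comp hf))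
    have hDle : ∀ x, D x ≤ gm.toReal := fun x =>
      max_le ENNReal.toReal_nonneg (by linarith [ENNReal.toReal_nonneg (a := Λ {x' | f x' < f x})])
    rcases eq_or_lt_of_le (show (0:ℝ) ≤ p from ENNReal.toReal_nonneg) with hp0 | hp0
    · rw [← hp0]
      norm_num
      exact integral_nonneg hDnn
    · set r : ℝ := p / u with hr
      have hrpos : 0 < r := div_pos hp0 hu
      have hlayer := lintegral_eq_lintegral_meas_lt P (f := D)
        (Filter.Eventually.of_forall hDnn) hDmeas.aemeasurable
      have hlow : ∀ t ∈ Ioo (0:ℝ) r, ENNReal.ofReal (p - u * t) ≤ P {a | t < D a} := by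
        intro t ht
        have h1 := key_bound Λ P f hf hlevel u hPu m hfinm (ENNReal.ofReal t)
        have hsub : {x | Λ {x' | f x' < f x} + ENNReal.ofReal t < Λ {x' | f x' < f m}}
            ⊆ {a | t < D a} := by
          intro x hx
          simp only [mem_setOf_eq] at hx ⊢
          have hgx : Λ {x' | f x' < f x} ≠ ⊤ := by
            apply ne_top_of_le_ne_top (hfin x).ne
            exact measure_mono fun y (hy : f y < f x) => hy.le
          have htr : (Λ {x' | f x' < f x}).toReal + t < gm.toReal := by
            have h2 : ((Λ {x' | f x' < f x} + ENNReal.ofReal t)).toReal < gm.toReal := by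
              apply ENNReal.toReal_lt_toReal _ hfinm |>.2 hx
              exact ENNReal.add_ne_top.2 ⟨hgx, ENNReal.ofReal_ne_top⟩
            rwa [ENNReal.toReal_add hgx ENNReal.ofReal_ne_top,
              ENNReal.toReal_ofReal ht.1.le] at h2
          have : t < gm.toReal - (Λ {x' | f x' < f x}).toReal := by linarith
          exact lt_max_of_lt_right this
        calc ENNReal.ofReal (p - u * t)
            = P {x | f x < f m} - ENNReal.ofReal u * ENNReal.ofReal t := by
              rw [← ENNReal.ofReal_mul hu.le, ← hPSofReal,
                ← ENNReal.ofReal_sub _ (mul_nonneg hu.le ht.1.le)]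
          _ ≤ _ := h1.trans (measure_mono hsub)
      have hIoo : ∫⁻ t in Ioo (0:ℝ) r, ENNReal.ofReal (p - u * t)
          = ENNReal.ofReal (p ^ 2 / (2 * u)) := by
        have hcont : Continuous (fun t : ℝ => p - u * t) :=
          continuous_const.sub (continuous_const.mul continuous_id)
        have hint : IntegrableOn (fun t : ℝ => p - u * t) (Ioo 0 r) :=
          (hcont.integrableOn_Icc).mono_set Ioo_subset_Icc_self
        have hnn : 0 ≤ᵐ[volume.restrict (Ioo (0:ℝ) r)] fun t => p - u * t := by
          refine (ae_restrict_iff' measurableSet_Ioo).2 (Filter.Eventually.of_forall ?_)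
          intro t ht
          have h2 : u * t < u * r := mul_lt_mul_of_pos_left ht.2 hu
          have h3 : u * r = p := by rw [hr]; field_simp
          show (0:ℝ) ≤ p - u * t
          linarith
        rw [← ofReal_integral_eq_lintegral_ofReal hint hnn]
        congr 1
        rw [← integral_Ioc_eq_integral_Ioo, ← intervalIntegral.integral_of_le hrpos.le]
        have hcomp : ∫ t in (0:ℝ)..r, (p - u * t) = p * r - u * (r ^ 2 / 2) := by
          rw [intervalIntegral.integral_sub (intervalIntegrable_const (c := p))
            (intervalIntegral.intervalIntegrable_id.const_mul u),
            intervalIntegral.integral_const, intervalIntegral.integral_const_mul, integral_id]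
          simp
          ring
        rw [hcomp, hr]
        field_simp
        ring
      have hfinD : ∫⁻ x, ENNReal.ofReal (D x) ∂P ≠ ⊤ := by
        apply ne_top_of_le_ne_top (b := ENNReal.ofReal gm.toReal)
        · exact ENNReal.ofReal_ne_top
        · calc ∫⁻ x, ENNReal.ofReal (D x) ∂P
              ≤ ∫⁻ _, ENNReal.ofReal gm.toReal ∂P :=
                lintegral_mono fun x => ENNReal.ofReal_le_ofReal (hDle x)
            _ = ENNReal.ofReal gm.toReal := by simp [lintegral_const]
      have hanti : Antitone (fun t : ℝ => P {a | t < D a}) := by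
        intro s t hst
        exact measure_mono fun a (ha : t < D a) => lt_of_le_of_lt hst ha
      have hlint : ENNReal.ofReal (p ^ 2 / (2 * u)) ≤ ∫⁻ x, ENNReal.ofReal (D x) ∂P := by
        rw [hlayer, ← hIoo]
        calc ∫⁻ t in Ioo (0:ℝ) r, ENNReal.ofReal (p - u * t)
            ≤ ∫⁻ t in Ioo (0:ℝ) r, P {a | t < D a} :=
              setLIntegral_mono hanti.measurable hlow
          _ ≤ ∫⁻ t in Ioi (0:ℝ), P {a | t < D a} :=
              lintegral_mono_set Ioo_subset_Ioi_self
      have hieq : ∫ x, D x ∂P = (∫⁻ x, ENNReal.ofReal (D x) ∂P).toReal :=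
        integral_eq_lintegral_of_nonneg_ae (Filter.Eventually.of_forall hDnn)
          hDmeas.aestronglyMeasurable
      calc p ^ 2 / (2 * u) = (ENNReal.ofReal (p ^ 2 / (2 * u))).toReal :=
            (ENNReal.toReal_ofReal (by positivity)).symm
        _ ≤ (∫⁻ x, ENNReal.ofReal (D x) ∂P).toReal := ENNReal.toReal_mono hfinD hlint
        _ = ∫ x, D x ∂P := hieq.symm
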